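/- Let α > -1, β > -1, t ∈ ℝ and n ∈ ℕ. Then ∫_{-1}^1 e^{x t} (1-x)^α (1+x)^β P_n^{(α,β)}(x) dx = (t^n/n!) · 2^{α+β+n+1} · (Γ(α+n+1) Γ(β+n+1)/Γ(α+β+2n+2)) · e^{-t} · ₁F₁(β+n+1; α+β+2n+2; 2t). -/

import Mathlib

open MeasureTheory

/-- The Pochhammer symbol `(a)_n = a(a+1)⋯(a+n-1)`. -/
noncomputable def poch (a : ℝ) (n : ℕ) : ℝ := ∏ i ∈ Finset.range n, (a + i)

/-- The Jacobi polynomial `P_n^{(α,β)}(x)`. -/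
noncomputable def jacobiP (n : ℕ) (α β x : ℝ) : ℝ :=
  poch (α + 1) n / n.factorial *
    ∑ k ∈ Finset.range (n + 1),
      poch (-(n : ℝ)) k * poch ((n : ℝ) + α + β + 1) k /
        (poch (α + 1) k * k.factorial) * ((1 - x) / 2) ^ k

/-- The confluent hypergeometric function `₁F₁(a; c; z)`. -/
noncomputable def oneF1 (a c z : ℝ) : ℝ :=
  ∑' n : ℕ, poch a n * z ^ n / (poch c n * n.factorial)

lemma poch_zero (a : ℝ) : poch a 0 = 1 := by simp [poch]

lemma poch_succ (a : ℝ) (n : ℕ) : poch a (n+1) = poch a n * (a + n) := by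
  simp [poch, Finset.prod_range_succ]

lemma poch_succ' (a : ℝ) (n : ℕ) : poch a (n+1) = a * poch (a+1) n := by
  simp only [poch, Finset.prod_range_succ']
  rw [mul_comm]
  congr 1
  · simp
  · apply Finset.prod_congr rfl; intro i _; push_cast; ring

lemma poch_pos {a : ℝ} (ha : 0 < a) (n : ℕ) : 0 < poch a n := by
  apply Finset.prod_pos; intro i _; positivity

lemma poch_add (a : ℝ) (m n : ℕ) : poch a (m + n) = poch a m * poch (a + m) n := by
  simp only [poch, Finset.prod_range_add]
  congr 1
  apply Finset.prod_congr rfl; intro i _; push_cast; ring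

lemma Gamma_poch {a : ℝ} (ha : 0 < a) (n : ℕ) :
    Real.Gamma (a + n) = Real.Gamma a * poch a n := by
  induction n with
  | zero => simp [poch_zero]
  | succ n ih =>
    have h : a + ((n+1 : ℕ) : ℝ) = (a + n) + 1 := by push_cast; ring
    rw [h, Real.Gamma_add_one (by positivity), ih, poch_succ]; ring

lemma poch_neg_nat (n k : ℕ) (hk : k ≤ n) :
    poch (-(n:ℝ)) k = (-1)^k * ((n.choose k) * k.factorial : ℝ) := by
  induction k with
  | zero => simp [poch_zero]
  | succ k ih =>
    have hk' : k ≤ n := by omega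
    rw [poch_succ, ih hk', pow_succ]
    have key : ((n.choose (k+1)) * (k+1).factorial : ℝ) = ((n.choose k) * k.factorial : ℝ) * ((n:ℝ) - k) := by
      have h1 : (n.choose (k+1)) * (k+1).factorial * (n - (k+1)).factorial = n.factorial := Nat.choose_mul_factorial_mul_factorial hk
      have h2 : (n.choose k) * k.factorial * (n - k).factorial = n.factorial := Nat.choose_mul_factorial_mul_factorial hk'
      have h3 : (n - k) = (n - (k+1)) + 1 := by omega
      have h4 : ((n:ℝ) - k) = (((n - (k+1)) : ℕ) : ℝ) + 1 := by
        have h5 : (n:ℝ) = ((n - (k+1) : ℕ) : ℝ) + (k+1) := by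
          have h6 : n = (n - (k+1)) + (k+1) := by omega
          nth_rewrite 1 [h6]; push_cast; ring
        rw [h5]; push_cast; ring
      have h6 : ((n - k).factorial : ℝ) = ((n - (k+1)).factorial : ℝ) * ((n:ℝ) - k) := by
        rw [h3, Nat.factorial_succ, h4]
        push_cast
        ring
      have h7 : (0:ℝ) < ((n - (k+1)).factorial : ℝ) := by positivity
      have h1' : ((n.choose (k+1)) : ℝ) * ((k+1).factorial : ℝ) * ((n - (k+1)).factorial : ℝ) = (n.factorial : ℝ) := by exact_mod_cast h1
      have h2' : ((n.choose k) : ℝ) * (k.factorial : ℝ) * ((n - k).factorial : ℝ) = (n.factorial : ℝ) := by exact_mod_cast h2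
      rw [h6] at h2'
      nlinarith [h1', h2']
    rw [key]
    push_cast
    ring

/-- Chu–Vandermonde, product form. -/
lemma vandermonde_prod (n : ℕ) (b c : ℝ) :
    ∑ k ∈ Finset.range (n+1), (-1:ℝ)^k * (n.choose k) * poch b k * poch (c + k) (n - k)
      = poch (c - b) n := by
  induction n generalizing c with
  | zero => simp [poch_zero]
  | succ n ih =>
    have step : ∑ k ∈ Finset.range (n+1+1), (-1:ℝ)^k * ((n+1).choose k) * poch b k * poch (c + k) (n+1 - k)
        = ∑ j ∈ Finset.range (n+1), (c - b) * ((-1:ℝ)^j * (n.choose j) * poch b j * poch ((c+1) + j) (n - j)) := by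
      rw [Finset.sum_range_succ']
      have e0 : (-1:ℝ)^0 * ((n+1).choose 0) * poch b 0 * poch (c + (0:ℕ)) (n+1-0) = poch c (n+1) := by
        simp [poch_zero]
      rw [e0]
      have hterm : ∀ j ∈ Finset.range (n+1),
          (-1:ℝ)^(j+1) * (((n+1).choose (j+1)) : ℝ) * poch b (j+1) * poch (c+(j+1:ℕ)) (n+1-(j+1))
          = (-((-1:ℝ)^j * (n.choose j) * poch b j * ((b+j) * poch ((c+1)+j) (n-j))))
            + ((-1:ℝ)^(j+1) * ((n.choose (j+1)):ℝ) * poch b (j+1) * poch (c+(j+1:ℕ)) (n+1-(j+1))) := by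
        intro j hj
        rw [Finset.mem_range] at hj
        have hc : (((n+1).choose (j+1)) : ℝ) = (n.choose j : ℝ) + (n.choose (j+1) : ℝ) := by
          rw [Nat.choose_succ_succ]; push_cast; ring
        have hb : poch b (j+1) = poch b j * (b + j) := poch_succ b j
        have hcc : poch (c+(j+1:ℕ)) (n+1-(j+1)) = poch ((c+1)+j) (n-j) := by
          congr 1 <;> [skip; omega]
          push_cast; ring
        rw [hc, hcc, hb]
        ring
      rw [Finset.sum_congr rfl hterm, Finset.sum_add_distrib]
      have hsecond : ∑ j ∈ Finset.range (n+1),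
          (-1:ℝ)^(j+1) * ((n.choose (j+1)):ℝ) * poch b (j+1) * poch (c+(j+1:ℕ)) (n+1-(j+1))
          = (∑ k ∈ Finset.range (n+1+1), (-1:ℝ)^k * ((n.choose k):ℝ) * poch b k * poch (c+k) (n+1-k)) - poch c (n+1) := by
        have e := Finset.sum_range_succ' (fun k => (-1:ℝ)^k * ((n.choose k):ℝ) * poch b k * poch (c+k) (n+1-k)) (n+1)
        rw [e]
        have e2 : (-1:ℝ)^(0:ℕ) * ((n.choose 0):ℝ) * poch b 0 * poch (c+(0:ℕ)) (n+1-0) = poch c (n+1) := by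
          simp [poch_zero]
        rw [e2]
        ring
      rw [hsecond]
      have hlast : ∑ k ∈ Finset.range (n+1+1), (-1:ℝ)^k * ((n.choose k):ℝ) * poch b k * poch (c+k) (n+1-k)
          = ∑ k ∈ Finset.range (n+1), (-1:ℝ)^k * ((n.choose k):ℝ) * poch b k * ((c+k) * poch ((c+1)+k) (n-k)) := by
        rw [Finset.sum_range_succ, Nat.choose_succ_self]
        simp only [Nat.cast_zero, mul_zero, zero_mul, add_zero]
        apply Finset.sum_congr rfl
        intro k hk
        rw [Finset.mem_range] at hk
        have h1 : n + 1 - k = (n - k) + 1 := by omega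
        rw [h1, poch_succ']
        have h2 : c + (k:ℝ) + 1 = (c+1) + k := by ring
        rw [h2]
      rw [hlast]
      have hfin : ∀ S1 S2 P : ℝ, S1 + (S2 - P) + P = S1 + S2 := by intros; ring
      rw [hfin, ← Finset.sum_add_distrib]
      apply Finset.sum_congr rfl
      intro k hk
      ring
    rw [step, ← Finset.mul_sum, ih (c+1)]
    have : c + 1 - b = (c - b) + 1 := by ring
    rw [this, ← poch_succ']

/-- Chu–Vandermonde, division form. -/
lemma vandermonde_div (n : ℕ) (b : ℝ) {c : ℝ} (hc : 0 < c) :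
    ∑ k ∈ Finset.range (n+1), poch (-(n:ℝ)) k * poch b k / (poch c k * k.factorial)
      = poch (c - b) n / poch c n := by
  rw [eq_div_iff (poch_pos hc n).ne', ← vandermonde_prod n b c, Finset.sum_mul]
  apply Finset.sum_congr rfl
  intro k hk
  rw [Finset.mem_range] at hk
  have hk' : k ≤ n := by omega
  have hsplit : poch c n = poch c k * poch (c + k) (n - k) := by
    rw [← poch_add]; congr 1; omega
  rw [poch_neg_nat n k hk', hsplit]
  have h1 : (0:ℝ) < poch c k := poch_pos hc k
  have h2 : (0:ℝ) < (k.factorial : ℝ) := by positivity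
  field_simp

lemma poch_nat_add_one (j n : ℕ) : poch ((j:ℝ)+1) n = ((j+n).factorial : ℝ) / (j.factorial : ℝ) := by
  induction n with
  | zero =>
    have : (j.factorial : ℝ) ≠ 0 := by positivity
    simp [poch_zero, this]
  | succ n ih =>
    rw [poch_succ, ih]
    have h : (j + (n+1)).factorial = (j+n).factorial * ((j+n) + 1) := by
      rw [show j + (n+1) = (j+n) + 1 by omega, Nat.factorial_succ]; ring
    rw [h]
    push_cast
    rw [div_mul_eq_mul_div]
    ring_nf

lemma poch_eq_zero_of_lt {m n : ℕ} (h : m < n) : poch ((m:ℝ)+1-(n:ℝ)) n = 0 := by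
  apply Finset.prod_eq_zero (i := n - 1 - m) (by simp [Finset.mem_range]; omega)
  have h2 : ((n - 1 - m : ℕ) : ℝ) = (n:ℝ) - ((m:ℝ)+1) := by
    have h3 : (n - 1 - m : ℕ) + (m + 1) = n := by omega
    have h4 := congrArg (Nat.cast : ℕ → ℝ) h3
    push_cast at h4
    linarith
  rw [h2]; ring

lemma rpow_mul_npow {v : ℝ} (hv : 0 ≤ v) {p : ℝ} (hp : -1 < p) (k : ℕ) :
    v ^ p * v ^ k = v ^ (p + (k:ℝ)) := by
  rcases eq_or_lt_of_le hv with h | h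
  · rcases Nat.eq_zero_or_pos k with rfl | hk
    · simp
    · rw [← h]
      have hk1 : (1:ℝ) ≤ (k:ℝ) := by exact_mod_cast hk
      rw [Real.zero_rpow (by nlinarith : p + (k:ℝ) ≠ 0)]
      rw [zero_pow (by omega), mul_zero]
  · rw [← Real.rpow_natCast v k, ← Real.rpow_add h]

lemma complex_eq_real_beta {p q : ℝ} (u : ℝ) (hu : u ∈ Set.Ioc (0:ℝ) 1) :
    (u:ℂ) ^ ((p:ℂ)+1-1) * (1-(u:ℂ)) ^ ((q:ℂ)+1-1) = ((u ^ p * (1-u) ^ q : ℝ) : ℂ) := by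
  obtain ⟨h0, h1⟩ := hu
  have e1 : ((p:ℂ)+1-1) = ((p:ℝ):ℂ) := by ring
  have e2 : ((q:ℂ)+1-1) = ((q:ℝ):ℂ) := by ring
  rw [e1, e2, ← Complex.ofReal_cpow h0.le, ← Complex.ofReal_one, ← Complex.ofReal_sub,
    ← Complex.ofReal_cpow (by linarith), ← Complex.ofReal_mul]

lemma realBeta_integrable {p q : ℝ} (hp : -1 < p) (hq : -1 < q) :
    IntegrableOn (fun u : ℝ => u ^ p * (1-u) ^ q) (Set.Ioc 0 1) := by
  have hC := Complex.betaIntegral_convergent (u := (p:ℂ)+1) (v := (q:ℂ)+1)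
    (by simp; linarith) (by simp; linarith)
  have hC1 : IntegrableOn (fun x : ℝ => (x:ℂ) ^ ((p:ℂ)+1-1) * (1-(x:ℂ)) ^ ((q:ℂ)+1-1))
      (Set.Ioc 0 1) := hC.1
  have hC2 : IntegrableOn (fun x : ℝ => ((x ^ p * (1-x) ^ q : ℝ) : ℂ)) (Set.Ioc 0 1) :=
    hC1.congr_fun (fun x hx => complex_eq_real_beta x hx) measurableSet_Ioc
  have := hC2.re
  exact (by simpa using this : Integrable (fun x : ℝ => x ^ p * (1 - x) ^ q) (volume.restrict (Set.Ioc 0 1)))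

lemma realBeta_value {p q : ℝ} (hp : -1 < p) (hq : -1 < q) :
    ∫ u in Set.Ioc (0:ℝ) 1, u ^ p * (1-u) ^ q
      = Real.Gamma (p+1) * Real.Gamma (q+1) / Real.Gamma (p+q+2) := by
  have hG := Complex.Gamma_mul_Gamma_eq_betaIntegral (s := (p:ℂ)+1) (t := (q:ℂ)+1)
    (by simp; linarith) (by simp; linarith)
  rw [Complex.betaIntegral] at hG
  rw [intervalIntegral.integral_of_le zero_le_one] at hG
  rw [setIntegral_congr_fun measurableSet_Ioc (fun x hx => complex_eq_real_beta x hx)] at hG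
  rw [show (∫ x in Set.Ioc (0:ℝ) 1, ((x ^ p * (1-x) ^ q : ℝ) : ℂ))
      = ((∫ x in Set.Ioc (0:ℝ) 1, x ^ p * (1-x) ^ q : ℝ) : ℂ) from integral_ofReal] at hG
  have ep : ((p:ℂ)+1) = (((p+1:ℝ)):ℂ) := by push_cast; ring
  have eq' : ((q:ℂ)+1) = (((q+1:ℝ)):ℂ) := by push_cast; ring
  rw [ep, eq', Complex.Gamma_ofReal, Complex.Gamma_ofReal] at hG
  rw [show ((p+1:ℝ):ℂ) + ((q+1:ℝ):ℂ) = (((p+q+2:ℝ)):ℂ) by push_cast; ring,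
    Complex.Gamma_ofReal] at hG
  have hG' : Real.Gamma (p+1) * Real.Gamma (q+1)
      = Real.Gamma (p+q+2) * ∫ u in Set.Ioc (0:ℝ) 1, u ^ p * (1-u) ^ q := by
    exact_mod_cast hG
  have hpos : 0 < Real.Gamma (p+q+2) := Real.Gamma_pos_of_pos (by linarith)
  field_simp [hG']
  linarith [hG']

lemma exp_mul_integral {w : ℝ → ℝ} (hw : IntegrableOn w (Set.Ioc 0 1)) (z : ℝ) :
    ∫ u in Set.Ioc (0:ℝ) 1, Real.exp (z*u) * w u
      = ∑' m : ℕ, z^m / m.factorial * ∫ u in Set.Ioc (0:ℝ) 1, u^m * w u := by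
  set μ := volume.restrict (Set.Ioc (0:ℝ) 1) with hμ
  set F : ℕ → ℝ → ℝ := fun m u => z^m / m.factorial * (u^m * w u) with hF
  have hint : ∀ m, Integrable (F m) μ := by
    intro m
    apply Integrable.const_mul
    apply Integrable.bdd_mul (c := 1) hw
    · exact (continuous_pow m).aestronglyMeasurable
    · filter_upwards [ae_restrict_mem measurableSet_Ioc] with u hu
      obtain ⟨h0, h1⟩ := hu
      rw [Real.norm_eq_abs, abs_pow, abs_of_pos h0]
      exact pow_le_one₀ h0.le h1
  have hbound : ∀ m, (∫ u, ‖F m u‖ ∂μ) ≤ |z|^m / m.factorial * ∫ u, ‖w u‖ ∂μ := by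
    intro m
    have h : ∀ u, ‖F m u‖ = |z|^m / m.factorial * ‖u^m * w u‖ := by
      intro u
      simp only [hF, norm_mul, Real.norm_eq_abs, abs_div, abs_pow]
      simp [Nat.abs_cast]
    simp_rw [h]
    rw [integral_const_mul]
    apply mul_le_mul_of_nonneg_left ?_ (by positivity)
    apply integral_mono_of_nonneg
    · filter_upwards with u; positivity
    · exact hw.norm
    · filter_upwards [ae_restrict_mem measurableSet_Ioc] with u hu
      obtain ⟨h0, h1⟩ := hu
      rw [Real.norm_eq_abs, Real.norm_eq_abs, abs_mul, abs_pow, abs_of_pos h0]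
      calc u^m * |w u| ≤ 1 * |w u| := by
            apply mul_le_mul_of_nonneg_right (pow_le_one₀ h0.le h1) (abs_nonneg _)
        _ = |w u| := one_mul _
  have hsum : Summable fun m => ∫ u, ‖F m u‖ ∂μ := by
    apply Summable.of_nonneg_of_le (fun m => integral_nonneg (fun u => norm_nonneg _)) hbound
    exact (Real.summable_pow_div_factorial |z|).mul_right _
  have key := integral_tsum_of_summable_integral_norm hint hsum
  have hpt : ∀ u : ℝ, (∑' m : ℕ, F m u) = Real.exp (z*u) * w u := by
    intro u
    have he : Real.exp (z*u) = ∑' m : ℕ, (z*u)^m / m.factorial := by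
      rw [Real.exp_eq_exp_ℝ, NormedSpace.exp_eq_tsum_div]
    rw [he, ← tsum_mul_right]
    apply tsum_congr
    intro m
    simp only [hF, mul_pow]
    ring
  calc ∫ u, Real.exp (z*u) * w u ∂μ = ∫ u, (∑' m : ℕ, F m u) ∂μ := by
        apply integral_congr_ae
        filter_upwards with u
        exact (hpt u).symm
    _ = ∑' m : ℕ, ∫ u, F m u ∂μ := key.symm
    _ = ∑' m : ℕ, z^m / m.factorial * ∫ u, u^m * w u ∂μ := by
        apply tsum_congr
        intro m
        exact integral_const_mul _ _


/-- The weight function appearing after the change of variables. -/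
noncomputable def wfun (n : ℕ) (α β : ℝ) : ℝ → ℝ := fun u =>
  ∑ k ∈ Finset.range (n+1),
    poch (-(n:ℝ)) k * poch ((n:ℝ)+α+β+1) k / (poch (α+1) k * (k.factorial:ℝ))
      * (u^β * (1-u)^(α+(k:ℝ)))

lemma wfun_integrable {α β : ℝ} (hα : -1 < α) (hβ : -1 < β) (n : ℕ) :
    IntegrableOn (wfun n α β) (Set.Ioc 0 1) := by
  apply integrable_finset_sum
  intro k _
  exact (realBeta_integrable hβ (by push_cast; linarith : (-1:ℝ) < α + (k:ℝ))).const_mul _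

lemma wfun_moment {α β : ℝ} (hα : -1 < α) (hβ : -1 < β) (n m : ℕ) :
    ∫ u in Set.Ioc (0:ℝ) 1, u^m * wfun n α β u
      = Real.Gamma (β+(m:ℝ)+1) * Real.Gamma (α+1) * poch ((m:ℝ)+1-(n:ℝ)) n
          / Real.Gamma (α+β+(m:ℝ)+(n:ℝ)+2) := by
  have step1 : ∫ u in Set.Ioc (0:ℝ) 1, u^m * wfun n α β u
      = ∫ u in Set.Ioc (0:ℝ) 1, ∑ k ∈ Finset.range (n+1),
          poch (-(n:ℝ)) k * poch ((n:ℝ)+α+β+1) k / (poch (α+1) k * (k.factorial:ℝ))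
            * (u^(β+(m:ℝ)) * (1-u)^(α+(k:ℝ))) := by
    apply setIntegral_congr_fun measurableSet_Ioc
    intro u hu
    obtain ⟨h0, h1⟩ := hu
    simp only [wfun, Finset.mul_sum]
    apply Finset.sum_congr rfl
    intro k _
    rw [← rpow_mul_npow h0.le hβ m]
    ring
  rw [step1, integral_finset_sum]
  swap
  · intro k _
    exact (realBeta_integrable (by push_cast; linarith : (-1:ℝ) < β + (m:ℝ))
      (by push_cast; linarith : (-1:ℝ) < α + (k:ℝ))).const_mul _
  have step2 : ∀ k ∈ Finset.range (n+1),
      (∫ u in Set.Ioc (0:ℝ) 1,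
        poch (-(n:ℝ)) k * poch ((n:ℝ)+α+β+1) k / (poch (α+1) k * (k.factorial:ℝ))
          * (u^(β+(m:ℝ)) * (1-u)^(α+(k:ℝ))))
      = (Real.Gamma (β+(m:ℝ)+1) * Real.Gamma (α+1) / Real.Gamma ((α+β+(m:ℝ)+2)+(k:ℝ)))
          * (poch (-(n:ℝ)) k * poch ((n:ℝ)+α+β+1) k / (poch (α+1) k * (k.factorial:ℝ)))
          * poch (α+1) k := by
    intro k _
    rw [integral_const_mul, realBeta_value (by push_cast; linarith) (by push_cast; linarith)]
    rw [show β+(m:ℝ)+(α+(k:ℝ))+2 = (α+β+(m:ℝ)+2)+(k:ℝ) by ring,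
        show α+(k:ℝ)+1 = (α+1)+(k:ℝ) by ring,
        Gamma_poch (by linarith : (0:ℝ) < α+1) k]
    ring
  rw [Finset.sum_congr rfl step2]
  have hc0 : (0:ℝ) < α+β+(m:ℝ)+2 := by
    have : (0:ℝ) ≤ (m:ℝ) := Nat.cast_nonneg m
    linarith
  have step3 : ∀ k ∈ Finset.range (n+1),
      (Real.Gamma (β+(m:ℝ)+1) * Real.Gamma (α+1) / Real.Gamma ((α+β+(m:ℝ)+2)+(k:ℝ)))
          * (poch (-(n:ℝ)) k * poch ((n:ℝ)+α+β+1) k / (poch (α+1) k * (k.factorial:ℝ)))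
          * poch (α+1) k
      = (Real.Gamma (β+(m:ℝ)+1) * Real.Gamma (α+1) / Real.Gamma (α+β+(m:ℝ)+2))
          * (poch (-(n:ℝ)) k * poch ((n:ℝ)+α+β+1) k
              / (poch (α+β+(m:ℝ)+2) k * (k.factorial:ℝ))) := by
    intro k _
    rw [Gamma_poch hc0 k]
    have h1 : (0:ℝ) < poch (α+1) k := poch_pos (by linarith) k
    have h2 : (0:ℝ) < poch (α+β+(m:ℝ)+2) k := poch_pos hc0 k
    have h3 : (0:ℝ) < (k.factorial:ℝ) := by positivity
    have h4 : (0:ℝ) < Real.Gamma (α+β+(m:ℝ)+2) := Real.Gamma_pos_of_pos hc0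
    field_simp
  rw [Finset.sum_congr rfl step3, ← Finset.mul_sum, vandermonde_div n _ hc0]
  rw [show α+β+(m:ℝ)+2 - ((n:ℝ)+α+β+1) = (m:ℝ)+1-(n:ℝ) by ring]
  have h4 : (0:ℝ) < Real.Gamma (α+β+(m:ℝ)+2) := Real.Gamma_pos_of_pos hc0
  have h5 : (0:ℝ) < poch (α+β+(m:ℝ)+2) n := poch_pos hc0 n
  have h6 : Real.Gamma (α+β+(m:ℝ)+(n:ℝ)+2) = Real.Gamma (α+β+(m:ℝ)+2) * poch (α+β+(m:ℝ)+2) n := by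
    rw [show α+β+(m:ℝ)+(n:ℝ)+2 = (α+β+(m:ℝ)+2)+(n:ℝ) by ring, Gamma_poch hc0 n]
  rw [h6]
  field_simp

/-- Evaluation of `∫_{-1}^1 e^{xt} (1-x)^α (1+x)^β P_n^{(α,β)}(x) dx`. -/
theorem jacobi_exponential_integral (α β : ℝ) (hα : -1 < α) (hβ : -1 < β)
    (t : ℝ) (n : ℕ) :
    ∫ x in (-1 : ℝ)..1,
        Real.exp (x * t) * (1 - x) ^ α * (1 + x) ^ β * jacobiP n α β x =
      t ^ n / n.factorial * (2 : ℝ) ^ (α + β + n + 1) *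
        (Real.Gamma (α + n + 1) * Real.Gamma (β + n + 1) /
          Real.Gamma (α + β + 2 * n + 2)) *
        Real.exp (-t) * oneF1 (β + n + 1) (α + β + 2 * n + 2) (2 * t) := by
  have h2t : (0:ℝ) < 2 := two_pos
  set G : ℝ → ℝ := fun x => Real.exp (x * t) * (1 - x) ^ α * (1 + x) ^ β * jacobiP n α β x
    with hGdef
  have cv := intervalIntegral.integral_comp_mul_add (a := (0:ℝ)) (b := 1) G two_ne_zero (-1)
  rw [show (2:ℝ)*0 + -1 = -1 by norm_num, show (2:ℝ)*1 + -1 = 1 by norm_num] at cv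
  have cv2 : (∫ x in (-1:ℝ)..1, G x) = 2 * ∫ u in (0:ℝ)..1, G (2*u + -1) := by
    rw [cv, smul_eq_mul]; ring
  have cv3 : (∫ u in (0:ℝ)..1, G (2*u + -1)) = ∫ u in Set.Ioc (0:ℝ) 1, G (2*u + -1) :=
    intervalIntegral.integral_of_le zero_le_one
  have hcongr : ∀ u ∈ Set.Ioc (0:ℝ) 1, G (2*u + -1)
      = (Real.exp (-t) * (2:ℝ)^(α+β) * (poch (α+1) n / n.factorial))
          * (Real.exp (2*t*u) * wfun n α β u) := by
    intro u hu
    obtain ⟨h0, h1⟩ := hu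
    simp only [hGdef, wfun, jacobiP]
    rw [show (1:ℝ) - (2*u + -1) = 2*(1-u) by ring,
        show (1:ℝ) + (2*u + -1) = 2*u by ring,
        show (2*u + -1) * t = 2*t*u + -t by ring,
        Real.exp_add,
        Real.mul_rpow (by norm_num : (0:ℝ) ≤ 2) (by linarith : (0:ℝ) ≤ 1-u),
        Real.mul_rpow (by norm_num : (0:ℝ) ≤ 2) h0.le,
        show (2*(1-u))/2 = 1 - u by ring]
    have key : ∀ k ∈ Finset.range (n+1),
        poch (-(n:ℝ)) k * poch ((n:ℝ)+α+β+1) k / (poch (α+1) k * (k.factorial:ℝ))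
          * (u^β * (1-u)^(α+(k:ℝ)))
        = (u^β * (1-u)^α) * (poch (-(n:ℝ)) k * poch ((n:ℝ)+α+β+1) k
            / (poch (α+1) k * (k.factorial:ℝ)) * (1-u)^k) := by
      intro k _
      rw [← rpow_mul_npow (by linarith : (0:ℝ) ≤ 1-u) hα k]
      ring
    rw [Finset.sum_congr rfl key, ← Finset.mul_sum,
        show (2:ℝ)^(α+β) = 2^α * 2^β from Real.rpow_add two_pos α β]
    ring
  have cv4 : (∫ u in Set.Ioc (0:ℝ) 1, G (2*u + -1))
      = (Real.exp (-t) * (2:ℝ)^(α+β) * (poch (α+1) n / n.factorial))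
          * ∫ u in Set.Ioc (0:ℝ) 1, Real.exp (2*t*u) * wfun n α β u := by
    rw [setIntegral_congr_fun measurableSet_Ioc hcongr, integral_const_mul]
  have hser := exp_mul_integral (wfun_integrable hα hβ n) (2*t)
  set f : ℕ → ℝ := fun m => (2*t)^m / m.factorial *
      (Real.Gamma (β+(m:ℝ)+1) * Real.Gamma (α+1) * poch ((m:ℝ)+1-(n:ℝ)) n
        / Real.Gamma (α+β+(m:ℝ)+(n:ℝ)+2)) with hfdef
  have hser2 : (∫ u in Set.Ioc (0:ℝ) 1, Real.exp (2*t*u) * wfun n α β u) = ∑' m : ℕ, f m := by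
    rw [hser]
    exact tsum_congr fun m => by rw [wfun_moment hα hβ n m]
  have hsupp : Function.support f ⊆ Set.range (· + n) := by
    intro m hm
    rcases lt_or_ge m n with h | h
    · exfalso
      apply hm
      simp only [hfdef, poch_eq_zero_of_lt h]
      ring
    · exact ⟨m - n, show m - n + n = m by omega⟩
  have hreindex : (∑' m : ℕ, f m) = ∑' j : ℕ, f (j + n) :=
    ((add_left_injective n).tsum_eq hsupp).symm
  have hn0 : (0:ℝ) ≤ (n:ℝ) := Nat.cast_nonneg n
  have hβn : (0:ℝ) < β + (n:ℝ) + 1 := by linarith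
  have hcn : (0:ℝ) < α + β + 2*(n:ℝ) + 2 := by linarith
  have hterm : ∀ j : ℕ, f (j + n)
      = ((2*t)^n * Real.Gamma (β+(n:ℝ)+1) * Real.Gamma (α+1) / Real.Gamma (α+β+2*(n:ℝ)+2))
        * (poch (β+(n:ℝ)+1) j * (2*t)^j / (poch (α+β+2*(n:ℝ)+2) j * (j.factorial:ℝ))) := by
    intro j
    simp only [hfdef]
    rw [pow_add,
        show β+((j+n:ℕ):ℝ)+1 = (β+(n:ℝ)+1)+(j:ℝ) by push_cast; ring,
        Gamma_poch hβn j,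
        show ((j+n:ℕ):ℝ)+1-(n:ℝ) = (j:ℝ)+1 by push_cast; ring,
        poch_nat_add_one j n,
        show α+β+((j+n:ℕ):ℝ)+(n:ℝ)+2 = (α+β+2*(n:ℝ)+2)+(j:ℝ) by push_cast; ring,
        Gamma_poch hcn j]
    have h1 : ((j+n).factorial : ℝ) ≠ 0 := by positivity
    have h2 : ((j).factorial : ℝ) ≠ 0 := by positivity
    have h3 : Real.Gamma (α+β+2*(n:ℝ)+2) ≠ 0 := (Real.Gamma_pos_of_pos hcn).ne'
    have h4 : poch (α+β+2*(n:ℝ)+2) j ≠ 0 := (poch_pos hcn j).ne'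
    field_simp
  have hfinal : (∑' j : ℕ, f (j + n))
      = ((2*t)^n * Real.Gamma (β+(n:ℝ)+1) * Real.Gamma (α+1) / Real.Gamma (α+β+2*(n:ℝ)+2))
        * oneF1 (β + n + 1) (α + β + 2 * n + 2) (2 * t) := by
    rw [tsum_congr hterm, tsum_mul_left, oneF1]
  rw [cv2, cv3, cv4, hser2, hreindex, hfinal]
  rw [show Real.Gamma (α+(n:ℝ)+1) = Real.Gamma (α+1) * poch (α+1) n by
        rw [show α+(n:ℝ)+1 = (α+1)+(n:ℝ) by ring, Gamma_poch (by linarith) n],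
      show (2:ℝ)^(α+β+(n:ℝ)+1) = (2:ℝ)^(α+β) * (2:ℝ)^(n:ℕ) * 2 by
        rw [show α+β+(n:ℝ)+1 = ((α+β)+(n:ℝ))+(1:ℝ) by ring, Real.rpow_add two_pos,
          Real.rpow_add two_pos, Real.rpow_one, Real.rpow_natCast],
      mul_pow 2 t n]
  ring
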